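/- (Theorem 1.1, Ando) Let n ≥ 1. A linear map Φ : ℝⁿ → ℝⁿ satisfies Φ(x) ≺ Φ(y) whenever x ≺ y if and only if one of the following holds: (1) there exists a ∈ ℝⁿ such that Φ(x) = (Σᵢ xᵢ)·a for all x; or (2) there exist real numbers c, d and an n×n permutation matrix P such that Φ(x) = c·(P *ᵥ x) + d·(Σᵢ xᵢ)·e for all x, where e = (1, 1, …, 1) ∈ ℝⁿ. -/

import Mathlib

open Matrix BigOperators

/-- A matrix is doubly stochastic: nonnegative entries, row sums and column sums all 1. -/
def IsDoublyStochastic {n : ℕ} (A : Matrix (Fin n) (Fin n) ℝ) : Prop :=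
  (∀ i j, 0 ≤ A i j) ∧ (∀ i, ∑ j, A i j = 1) ∧ (∀ j, ∑ i, A i j = 1)

/-- `Maj x y` means `x ≺ y`: `x` is majorized by `y`. -/
def Maj {n : ℕ} (x y : Fin n → ℝ) : Prop :=
  ∃ A : Matrix (Fin n) (Fin n) ℝ, IsDoublyStochastic A ∧ x = A *ᵥ y

/-- `MajEq x y` means `x ∼ y`: mutual majorization. -/
def MajEq {n : ℕ} (x y : Fin n → ℝ) : Prop := Maj x y ∧ Maj y x

/-- `P` is a permutation matrix. -/
def IsPermMatrix {n : ℕ} (P : Matrix (Fin n) (Fin n) ℝ) : Prop :=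
  ∃ σ : Equiv.Perm (Fin n), P = σ.permMatrix ℝ

/-- The increasing rearrangement `x↑` of a vector. -/
noncomputable def incSort {n : ℕ} (x : Fin n → ℝ) : Fin n → ℝ := x ∘ Tuple.sort x

/-- The decreasing rearrangement `x↓` of a vector. -/
noncomputable def decSort {n : ℕ} (x : Fin n → ℝ) : Fin n → ℝ :=
  fun i => (x ∘ Tuple.sort x) i.rev

namespace AndoAux

variable {n : ℕ}


variable {n : ℕ}

lemma permMatrix_mulVec (σ : Equiv.Perm (Fin n)) (x : Fin n → ℝ) :
    (σ.permMatrix ℝ) *ᵥ x = x ∘ σ := by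
  funext i
  simp [Matrix.mulVec, dotProduct, Equiv.Perm.permMatrix, PEquiv.toMatrix_apply,
    Equiv.toPEquiv_apply]

lemma isDS_permMatrix (σ : Equiv.Perm (Fin n)) : IsDoublyStochastic (σ.permMatrix ℝ) := by
  refine ⟨fun i j => ?_, fun i => ?_, fun j => ?_⟩
  · simp only [Equiv.Perm.permMatrix, PEquiv.toMatrix_apply, Equiv.toPEquiv_apply, Option.mem_def,
      Option.some.injEq]
    positivity
  · simp only [Equiv.Perm.permMatrix, PEquiv.toMatrix_apply, Equiv.toPEquiv_apply, Option.mem_def,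
      Option.some.injEq]
    rw [Finset.sum_ite_eq Finset.univ (σ i) (fun _ => (1:ℝ))]
    simp
  · simp only [Equiv.Perm.permMatrix, PEquiv.toMatrix_apply, Equiv.toPEquiv_apply, Option.mem_def,
      Option.some.injEq]
    have h : ∀ i : Fin n, (if σ i = j then (1:ℝ) else 0) = if i = σ⁻¹ j then 1 else 0 := by
      intro i
      by_cases h : σ i = j
      · rw [if_pos h, if_pos]
        exact (Equiv.eq_symm_apply σ).mpr h
      · rw [if_neg h, if_neg]
        intro hh
        exact h (by simp [hh])
    simp_rw [h]
    rw [Finset.sum_ite_eq' Finset.univ (σ⁻¹ j) (fun _ => (1:ℝ))]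
    simp

lemma maj_comp_perm (y : Fin n → ℝ) (σ : Equiv.Perm (Fin n)) : Maj (y ∘ σ) y :=
  ⟨σ.permMatrix ℝ, isDS_permMatrix σ, (permMatrix_mulVec σ y).symm⟩

lemma maj_comp_perm' (y : Fin n → ℝ) (σ : Equiv.Perm (Fin n)) : Maj y (y ∘ σ) := by
  refine ⟨σ⁻¹.permMatrix ℝ, isDS_permMatrix _, ?_⟩
  rw [permMatrix_mulVec]
  funext i; simp

lemma maj_sum {x y : Fin n → ℝ} (h : Maj x y) : ∑ i, x i = ∑ i, y i := by
  obtain ⟨A, ⟨h0, hr, hc⟩, hxy⟩ := h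
  subst hxy
  simp only [Matrix.mulVec, dotProduct]
  rw [Finset.sum_comm]
  simp_rw [← Finset.sum_mul]
  simp [hc]

lemma variance_id (w v : Fin n → ℝ) (hw1 : ∑ j, w j = 1) :
    ∑ j, ∑ k, w j * w k * (v j - v k)^2 =
      2 * ((∑ j, w j * (v j)^2) - (∑ j, w j * v j)^2) := by
  have inner : ∀ j, ∑ k, w j * w k * (v j - v k)^2
      = (w j * (v j)^2) + w j * (∑ k, w k * (v k)^2) - (2 * (w j * v j)) * (∑ k, w k * v k) := by
    intro j
    have e : ∀ k, w j * w k * (v j - v k)^2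
        = (w j * (v j)^2) * w k + w j * (w k * (v k)^2) - (2 * (w j * v j)) * (w k * v k) :=
      fun k => by ring
    simp_rw [e]
    rw [Finset.sum_sub_distrib, Finset.sum_add_distrib, ← Finset.mul_sum, ← Finset.mul_sum,
      ← Finset.mul_sum, hw1]
    ring
  simp_rw [inner]
  rw [Finset.sum_sub_distrib, Finset.sum_add_distrib, ← Finset.sum_mul, ← Finset.sum_mul, hw1]
  have h2 : ∑ j, 2 * (w j * v j) = 2 * ∑ j, w j * v j := by rw [Finset.mul_sum]
  rw [h2]
  ring

/-- the per-row Jensen slack is nonnegative -/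
lemma row_slack_nonneg {A : Matrix (Fin n) (Fin n) ℝ} (h0 : ∀ i j, 0 ≤ A i j)
    (hr : ∀ i, ∑ j, A i j = 1) (y : Fin n → ℝ) (i : Fin n) :
    (∑ j, A i j * y j)^2 ≤ ∑ j, A i j * (y j)^2 := by
  have hv := variance_id (fun j => A i j) y (hr i)
  have hnn : 0 ≤ ∑ j, ∑ k, A i j * A i k * (y j - y k)^2 := by
    apply Finset.sum_nonneg
    intro j _
    apply Finset.sum_nonneg
    intro k _
    have := h0 i j
    have := h0 i k
    positivity
  nlinarith [hv]

lemma maj_sumsq {x y : Fin n → ℝ} (h : Maj x y) : ∑ i, (x i)^2 ≤ ∑ j, (y j)^2 := by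
  obtain ⟨A, ⟨h0, hr, hc⟩, hxy⟩ := h
  subst hxy
  have step : ∀ i, ((A *ᵥ y) i)^2 ≤ ∑ j, A i j * (y j)^2 := fun i =>
    row_slack_nonneg h0 hr y i
  calc ∑ i, ((A *ᵥ y) i)^2 ≤ ∑ i, ∑ j, A i j * (y j)^2 :=
        Finset.sum_le_sum (fun i _ => step i)
    _ = ∑ j, (y j)^2 := by
        rw [Finset.sum_comm]
        simp_rw [← Finset.sum_mul]
        simp [hc]

/-- equality case: if the sums of squares agree, positive entries force equal values -/
lemma contact {A : Matrix (Fin n) (Fin n) ℝ} (h0 : ∀ i j, 0 ≤ A i j)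
    (hr : ∀ i, ∑ j, A i j = 1) (hc : ∀ j, ∑ i, A i j = 1) {x y : Fin n → ℝ}
    (hxy : x = A *ᵥ y) (hsq : ∑ j, (y j)^2 ≤ ∑ i, (x i)^2) :
    ∀ i j, A i j ≠ 0 → x i = y j := by
  -- slack i := ∑ j, A i j * (y j)^2 - (x i)^2
  have slack_nonneg : ∀ i, 0 ≤ (∑ j, A i j * (y j)^2) - (x i)^2 := by
    intro i
    have := row_slack_nonneg h0 hr y i
    have hx : x i = ∑ j, A i j * y j := by rw [hxy]; rfl
    rw [hx]; linarith
  have total : ∑ i, ((∑ j, A i j * (y j)^2) - (x i)^2) ≤ 0 := by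
    rw [Finset.sum_sub_distrib]
    have : ∑ i, ∑ j, A i j * (y j)^2 = ∑ j, (y j)^2 := by
      rw [Finset.sum_comm]
      simp_rw [← Finset.sum_mul]
      simp [hc]
    rw [this]
    linarith
  have each_zero : ∀ i ∈ Finset.univ, ((∑ j, A i j * (y j)^2) - (x i)^2) = 0 := by
    have hle : ∑ i, ((∑ j, A i j * (y j)^2) - (x i)^2) = 0 :=
      le_antisymm total (Finset.sum_nonneg (fun i _ => slack_nonneg i))
    intro i hi
    exact (Finset.sum_eq_zero_iff_of_nonneg (fun i _ => slack_nonneg i)).mp hle i hi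
  intro i j hAij
  -- from variance identity: all cross terms vanish for this row
  have hv := variance_id (fun j => A i j) y (hr i)
  have hx : x i = ∑ j, A i j * y j := by rw [hxy]; rfl
  have hzero : ∑ j', ∑ k, A i j' * A i k * (y j' - y k)^2 = 0 := by
    rw [hv, ← hx]
    have := each_zero i (Finset.mem_univ i)
    linarith
  have term_zero : ∀ j' ∈ Finset.univ, ∀ k ∈ Finset.univ, A i j' * A i k * (y j' - y k)^2 = 0 := by
    have h1 : ∀ j' ∈ (Finset.univ : Finset (Fin n)), 0 ≤ ∑ k, A i j' * A i k * (y j' - y k)^2 := by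
      intro j' _
      apply Finset.sum_nonneg
      intro k _
      have := h0 i j'
      have := h0 i k
      positivity
    have h2 := (Finset.sum_eq_zero_iff_of_nonneg h1).mp hzero
    intro j' hj' k hk
    have h3 : ∀ k ∈ (Finset.univ : Finset (Fin n)), 0 ≤ A i j' * A i k * (y j' - y k)^2 := by
      intro k _
      have := h0 i j'
      have := h0 i k
      positivity
    exact (Finset.sum_eq_zero_iff_of_nonneg h3).mp (h2 j' hj') k hk
  -- now x i = y j
  have hval : ∀ k, A i k * y k = A i k * y j := by
    intro k
    by_cases hk : A i k = 0
    · rw [hk]; ring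
    · have ht := term_zero j (Finset.mem_univ j) k (Finset.mem_univ k)
      have : (y j - y k)^2 = 0 := by
        rcases mul_eq_zero.mp ht with h | h
        · rcases mul_eq_zero.mp h with h' | h'
          · exact absurd h' hAij
          · exact absurd h' hk
        · exact h
      have : y j = y k := by nlinarith [sq_nonneg (y j - y k)]
      rw [← this]
  rw [hx]
  simp_rw [hval]
  rw [← Finset.sum_mul, hr i, one_mul]

lemma exists_perm_of_majEq {u v : Fin n → ℝ} (h1 : Maj u v) (h2 : Maj v u) :
    ∃ σ : Equiv.Perm (Fin n), u = v ∘ σ := by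
  classical
  have hsq1 := maj_sumsq h1
  have hsq2 := maj_sumsq h2
  obtain ⟨A, ⟨hA0, hAr, hAc⟩, hu⟩ := h1
  obtain ⟨B, ⟨hB0, hBr, hBc⟩, hv⟩ := h2
  have huv : ∀ i j, A i j ≠ 0 → u i = v j := contact hA0 hAr hAc hu (le_of_le_of_eq hsq2 rfl)
  have hvu : ∀ i j, B i j ≠ 0 → v i = u j := contact hB0 hBr hBc hv hsq1
  -- fiber counts agree
  have count_le : ∀ (x y : Fin n → ℝ) (C : Matrix (Fin n) (Fin n) ℝ),
      (∀ i j, 0 ≤ C i j) → (∀ i, ∑ j, C i j = 1) → (∀ j, ∑ i, C i j = 1) →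
      (∀ i j, C i j ≠ 0 → x i = y j) → ∀ t : ℝ,
      (Finset.univ.filter (fun i => x i = t)).card ≤
        (Finset.univ.filter (fun j => y j = t)).card := by
    intro x y C hC0 hCr hCc hCxy t
    set fX := Finset.univ.filter (fun i => x i = t) with hfX
    set fY := Finset.univ.filter (fun j => y j = t) with hfY
    have key : (fX.card : ℝ) ≤ (fY.card : ℝ) := by
      have e1 : (fX.card : ℝ) = ∑ i ∈ fX, ∑ j, C i j := by
        rw [Finset.sum_congr rfl (fun i _ => hCr i)]
        simp
      have e2 : ∀ i ∈ fX, ∑ j, C i j = ∑ j ∈ fY, C i j := by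
        intro i hi
        rw [Finset.mem_filter] at hi
        symm
        apply Finset.sum_subset (Finset.subset_univ fY)
        intro j _ hj
        by_contra hne
        have := hCxy i j hne
        apply hj
        rw [Finset.mem_filter]
        exact ⟨Finset.mem_univ j, by rw [← this, hi.2]⟩
      rw [e1, Finset.sum_congr rfl e2, show ∑ i ∈ fX, ∑ j ∈ fY, C i j = ∑ j ∈ fY, ∑ i ∈ fX, C i j from Finset.sum_comm]
      calc ∑ j ∈ fY, ∑ i ∈ fX, C i j ≤ ∑ j ∈ fY, ∑ i, C i j := by
            apply Finset.sum_le_sum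
            intro j _
            exact Finset.sum_le_sum_of_subset_of_nonneg (Finset.subset_univ fX)
              (fun i _ _ => hC0 i j)
        _ = (fY.card : ℝ) := by
            rw [Finset.sum_congr rfl (fun j _ => hCc j)]
            simp
    exact_mod_cast key
  have counts : ∀ t : ℝ, (Finset.univ.filter (fun i => u i = t)).card =
      (Finset.univ.filter (fun j => v j = t)).card := by
    intro t
    apply le_antisymm
    · exact count_le u v A hA0 hAr hAc huv t
    · exact count_le v u B hB0 hBr hBc hvu t
  have cards : ∀ t : ℝ, Fintype.card {i // u i = t} = Fintype.card {j // v j = t} := by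
    intro t
    rw [Fintype.card_subtype, Fintype.card_subtype]
    exact counts t
  let e : ∀ t : ℝ, {i // u i = t} ≃ {j // v j = t} := fun t => Fintype.equivOfCardEq (cards t)
  refine ⟨Equiv.ofFiberEquiv e, ?_⟩
  funext i
  exact (Equiv.ofFiberEquiv_map e i).symm



lemma le_choose (m k : ℕ) (h1 : 1 ≤ k) (h2 : k + 1 ≤ m) : m ≤ m.choose k := by
  induction m generalizing k with
  | zero => omega
  | succ p ih =>
    obtain ⟨k', rfl⟩ : ∃ k', k = k' + 1 := ⟨k - 1, by omega⟩
    rw [Nat.choose_succ_succ]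
    simp only [Nat.succ_eq_add_one]
    rcases Nat.eq_zero_or_pos k' with hk' | hk'
    · subst hk'
      rw [Nat.zero_add, Nat.choose_zero_right, Nat.choose_one_right]
      omega
    · have hle : k' + 1 ≤ p := by omega
      have hA := ih k' hk' (by omega)
      have hB : 1 ≤ p.choose (k' + 1) := Nat.choose_pos hle
      omega

lemma lt_choose (m k : ℕ) (h1 : 2 ≤ k) (h2 : k + 2 ≤ m) : m < m.choose k := by
  obtain ⟨p, rfl⟩ : ∃ p, m = p + 1 := ⟨m - 1, by omega⟩
  obtain ⟨k', rfl⟩ : ∃ k', k = k' + 1 := ⟨k - 1, by omega⟩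
  rw [Nat.choose_succ_succ]
  simp only [Nat.succ_eq_add_one]
  have hA : p ≤ p.choose k' := le_choose p k' (by omega) (by omega)
  have hB : p ≤ p.choose (k' + 1) := le_choose p (k' + 1) (by omega) (by omega)
  omega

lemma factorial_bound {m k : ℕ} (h1 : 1 ≤ k) (h2 : k ≤ m - 1)
    (h : (m - 1).factorial ≤ k.factorial * (m - k).factorial) : k = 1 ∨ k = m - 1 := by
  by_contra hcon
  push_neg at hcon
  have hk2 : 2 ≤ k := by omega
  have hkm : k + 2 ≤ m := by omega
  have hchoose := lt_choose m k hk2 hkm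
  have hfac := Nat.choose_mul_factorial_mul_factorial (show k ≤ m by omega)
  have hmf : m.factorial = m * (m - 1).factorial := by
    obtain ⟨p, rfl⟩ : ∃ p, m = p + 1 := ⟨m - 1, by omega⟩
    simp [Nat.factorial_succ]
  have hpos : 0 < k.factorial * (m - k).factorial :=
    Nat.mul_pos (Nat.factorial_pos _) (Nat.factorial_pos _)
  have key : m * ((m-1).factorial) ≤ m * (k.factorial * (m-k).factorial) :=
    Nat.mul_le_mul_left m h
  have hlt : m * (k.factorial * (m - k).factorial)
      < m.choose k * (k.factorial * (m - k).factorial) :=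
    (Nat.mul_lt_mul_right hpos).mpr hchoose
  have heq : m.choose k * (k.factorial * (m - k).factorial) = m.factorial := by
    rw [← mul_assoc]; exact hfac
  omega


end AndoAux
namespace AndoAux2
open AndoAux
variable {n : ℕ}

variable {n : ℕ}

/-- orbit-stabilizer style counting for the precomposition action on a vector -/
lemma card_orbit_mul_stab (v : Fin n → ℝ) :
    (Finset.univ.image (fun ρ : Equiv.Perm (Fin n) => v ∘ ρ)).card *
      Fintype.card {g : Equiv.Perm (Fin n) // v ∘ g = v} = Nat.factorial n := by
  classical
  have hcover : ∀ ρ ∈ (Finset.univ : Finset (Equiv.Perm (Fin n))),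
      v ∘ ρ ∈ Finset.univ.image (fun ρ : Equiv.Perm (Fin n) => v ∘ ρ) :=
    fun ρ hρ => Finset.mem_image_of_mem _ hρ
  have hsplit := Finset.card_eq_sum_card_fiberwise hcover
  have hfiber : ∀ w ∈ Finset.univ.image (fun ρ : Equiv.Perm (Fin n) => v ∘ ρ),
      (Finset.univ.filter (fun ρ : Equiv.Perm (Fin n) => v ∘ ρ = w)).card
        = Fintype.card {g : Equiv.Perm (Fin n) // v ∘ g = v} := by
    intro w hw
    obtain ⟨ρ₀, _, hρ₀⟩ := Finset.mem_image.mp hw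
    rw [Fintype.card_subtype]
    symm
    apply Finset.card_bij (fun (g : Equiv.Perm (Fin n)) _ => g * ρ₀)
    · intro g hg
      rw [Finset.mem_filter] at hg ⊢
      refine ⟨Finset.mem_univ _, ?_⟩
      have : v ∘ ⇑(g * ρ₀) = (v ∘ ⇑g) ∘ ⇑ρ₀ := rfl
      rw [this, hg.2, hρ₀]
    · intro g1 h1 g2 h2 he
      exact mul_right_cancel he
    · intro σ hσ
      rw [Finset.mem_filter] at hσ
      refine ⟨σ * ρ₀⁻¹, ?_, by group⟩
      rw [Finset.mem_filter]
      refine ⟨Finset.mem_univ _, ?_⟩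
      have h1 : v ∘ ⇑(σ * ρ₀⁻¹) = (v ∘ ⇑σ) ∘ ⇑ρ₀⁻¹ := rfl
      rw [h1, hσ.2, ← hρ₀]
      funext i
      simp
  rw [Finset.sum_congr rfl hfiber, Finset.sum_const, smul_eq_mul] at hsplit
  rw [← hsplit, Finset.card_univ, Fintype.card_perm, Fintype.card_fin]

/-- shape lemma: nonconstant vector with large fiberwise-factorial product -/
lemma shape (v : Fin n → ℝ) (hnc : ∃ i j, v i ≠ v j)
    (hstab : Nat.factorial (n - 1) ≤
      ∏ t ∈ Finset.univ.image v, ((Finset.univ.filter (fun i => v i = t)).card).factorial) :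
    ∃ (i₀ : Fin n) (c d : ℝ), c ≠ 0 ∧ ∀ i, v i = if i = i₀ then c + d else d := by
  classical
  set T := Finset.univ.image v with hT
  set m : ℝ → ℕ := fun t => (Finset.univ.filter (fun i => v i = t)).card with hm
  have hsum : ∑ t ∈ T, m t = n := by
    have := Finset.card_eq_sum_card_image v (Finset.univ : Finset (Fin n))
    rw [Finset.card_univ, Fintype.card_fin] at this
    exact this.symm
  have hpos : ∀ t ∈ T, 1 ≤ m t := by
    intro t ht
    obtain ⟨i, _, hi⟩ := Finset.mem_image.mp ht
    have : i ∈ Finset.univ.filter (fun i => v i = t) := by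
      rw [Finset.mem_filter]; exact ⟨Finset.mem_univ _, hi⟩
    exact Finset.card_pos.mpr ⟨i, this⟩
  obtain ⟨i1, j1, hij⟩ := hnc
  have hT2 : 1 < T.card := by
    apply Finset.one_lt_card.mpr
    exact ⟨v i1, Finset.mem_image_of_mem v (Finset.mem_univ i1),
      v j1, Finset.mem_image_of_mem v (Finset.mem_univ j1), hij⟩
  -- every class has size 1 or n-1
  have hclass : ∀ t ∈ T, m t = 1 ∨ m t = n - 1 := by
    intro t ht
    have herase : ∑ s ∈ T.erase t, m s = n - m t := by
      have := Finset.add_sum_erase T m ht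
      omega
    have hprod : (m t).factorial * ∏ s ∈ T.erase t, (m s).factorial
        = ∏ s ∈ T, (m s).factorial := Finset.mul_prod_erase T (fun s => (m s).factorial) ht
    have hdvd := Nat.prod_factorial_dvd_factorial_sum (T.erase t) m
    rw [herase] at hdvd
    have hle : ∏ s ∈ T.erase t, (m s).factorial ≤ (n - m t).factorial :=
      Nat.le_of_dvd (Nat.factorial_pos _) hdvd
    have hbound : Nat.factorial (n - 1) ≤ (m t).factorial * (n - m t).factorial := by
      calc Nat.factorial (n-1) ≤ ∏ s ∈ T, (m s).factorial := hstab
        _ = (m t).factorial * ∏ s ∈ T.erase t, (m s).factorial := hprod.symm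
        _ ≤ (m t).factorial * (n - m t).factorial := Nat.mul_le_mul_left _ hle
    -- m t ≤ n - 1 : there is another nonempty class
    have hmt_le : m t ≤ n - 1 := by
      obtain ⟨t', ht', htt'⟩ := Finset.exists_mem_ne hT2 t
      have ht'e : t' ∈ T.erase t := Finset.mem_erase.mpr ⟨htt', ht'⟩
      have h1 : 1 ≤ ∑ s ∈ T.erase t, m s :=
        le_trans (hpos t' ht') (Finset.single_le_sum (fun s _ => Nat.zero_le (m s)) ht'e)
      omega
    exact factorial_bound (hpos t ht) hmt_le hbound
  -- find a big class of size n - 1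
  have hbig : ∃ t ∈ T, m t = n - 1 := by
    by_contra hno
    push_neg at hno
    have hall1 : ∀ t ∈ T, m t = 1 := by
      intro t ht
      rcases hclass t ht with h | h
      · exact h
      · exact absurd h (hno t ht)
    have hcardT : T.card = n := by
      have : ∑ t ∈ T, m t = T.card := by
        rw [Finset.sum_congr rfl hall1]; simp
      omega
    have hprod1 : ∏ t ∈ T, (m t).factorial = 1 := by
      apply Finset.prod_eq_one
      intro t ht
      rw [hall1 t ht]; rfl
    rw [hprod1] at hstab
    -- (n-1)! ≤ 1 means n ≤ 2; but T.card = n ≥ 2 means n = 2, so n - 1 = 1 = m t, contradiction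
    have hn2 : n ≤ 2 := by
      by_contra hn3
      push_neg at hn3
      have : 2 ≤ Nat.factorial (n - 1) := by
        calc 2 = Nat.factorial 2 := rfl
          _ ≤ Nat.factorial (n-1) := Nat.factorial_le (by omega)
      omega
    have hn : n = 2 := by omega
    obtain ⟨t, ht⟩ := Finset.card_pos.mp (by omega : 0 < T.card)
    exact hno t ht (by rw [hall1 t ht, hn])
  obtain ⟨tb, htb, hmtb⟩ := hbig
  -- the rest is a single class of size 1
  have hn2 : 2 ≤ n := by
    -- since there are ≥ 2 classes each of size ≥ 1
    have := Finset.exists_mem_ne hT2 tb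
    obtain ⟨t', ht', htt'⟩ := this
    have h1 := hpos t' ht'
    have h2 := hpos tb htb
    have : m tb + m t' ≤ ∑ t ∈ T, m t := by
      rw [← Finset.add_sum_erase T m htb]
      have : t' ∈ T.erase tb := Finset.mem_erase.mpr ⟨htt', ht'⟩
      have := Finset.single_le_sum (fun s (_ : s ∈ T.erase tb) => Nat.zero_le (m s)) this
      omega
    omega
  have herase_sum : ∑ s ∈ T.erase tb, m s = 1 := by
    have := Finset.add_sum_erase T m htb
    omega
  have herase_card : (T.erase tb).card = 1 := by
    have hne : (T.erase tb).Nonempty := by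
      rw [← Finset.card_pos]
      have := Finset.card_erase_of_mem htb
      omega
    obtain ⟨t', ht'⟩ := hne
    have h1 : 1 ≤ m t' := hpos t' (Finset.mem_of_mem_erase ht')
    rcases Finset.eq_singleton_or_nontrivial ht' with h | h
    · rw [h]; rfl
    · exfalso
      obtain ⟨t'', ht'', htt''⟩ := h.exists_ne t'
      have h2 : 1 ≤ m t'' := hpos t'' (Finset.mem_of_mem_erase ht'')
      have : m t' + m t'' ≤ ∑ s ∈ T.erase tb, m s := by
        rw [← Finset.add_sum_erase _ m ht']
        have htm : t'' ∈ (T.erase tb).erase t' := Finset.mem_erase.mpr ⟨htt'', ht''⟩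
        have := Finset.single_le_sum
          (fun s (_ : s ∈ (T.erase tb).erase t') => Nat.zero_le (m s)) htm
        omega
      omega
  obtain ⟨ts, hts⟩ := Finset.card_eq_one.mp herase_card
  have hts_mem : ts ∈ T.erase tb := by rw [hts]; exact Finset.mem_singleton_self ts
  have hmts : m ts = 1 := by
    have := herase_sum
    rw [hts, Finset.sum_singleton] at this
    exact this
  obtain ⟨i₀, hi₀⟩ := Finset.card_eq_one.mp hmts
  have hTfull : T = insert tb {ts} := by
    rw [← hts, Finset.insert_erase htb]
  have htsneq : ts ≠ tb := (Finset.mem_erase.mp hts_mem).1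
  refine ⟨i₀, ts - tb, tb, by intro h; apply htsneq; linarith, ?_⟩
  intro i
  by_cases hii : i = i₀
  · subst hii
    have : i ∈ Finset.univ.filter (fun i => v i = ts) := by
      rw [hi₀]; exact Finset.mem_singleton_self i
    rw [Finset.mem_filter] at this
    rw [if_pos rfl, this.2]
    ring
  · rw [if_neg hii]
    have hvi : v i ∈ T := Finset.mem_image_of_mem v (Finset.mem_univ i)
    rw [hTfull] at hvi
    rcases Finset.mem_insert.mp hvi with h | h
    · exact h
    · exfalso
      rw [Finset.mem_singleton] at h
      have : i ∈ Finset.univ.filter (fun i => v i = ts) := by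
        rw [Finset.mem_filter]; exact ⟨Finset.mem_univ _, h⟩
      rw [hi₀, Finset.mem_singleton] at this
      exact hii this

end AndoAux2
namespace AndoAux
open AndoAux2


lemma isDS_one : IsDoublyStochastic (1 : Matrix (Fin n) (Fin n) ℝ) := by
  refine ⟨fun i j => ?_, fun i => ?_, fun j => ?_⟩
  · rw [Matrix.one_apply]
    positivity
  · simp [Matrix.one_apply]
  · simp [Matrix.one_apply]

lemma exists_perm_pair_map {j k j' k' : Fin n} (h : j ≠ k) (h' : j' ≠ k') :
    ∃ σ : Equiv.Perm (Fin n), σ j = j' ∧ σ k = k' := by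
  classical
  set σ₁ := Equiv.swap j j' with hσ₁
  set k₁ := σ₁ k with hk₁def
  have hjj' : σ₁ j = j' := Equiv.swap_apply_left j j'
  have hk₁ : k₁ ≠ j' := by
    rw [hk₁def, ← hjj']
    intro hh
    exact h (σ₁.injective hh).symm
  refine ⟨σ₁.trans (Equiv.swap k₁ k'), ?_, ?_⟩
  · rw [Equiv.trans_apply, hjj']
    exact Equiv.swap_apply_of_ne_of_ne (Ne.symm hk₁) h'
  · rw [Equiv.trans_apply, ← hk₁def]
    exact Equiv.swap_apply_left k₁ k'

end AndoAux

open AndoAux AndoAux2 in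
/-- Theorem 1.1, Ando: a linear map `Φ` is strictly isotone iff it
is of the form `x ↦ (tr x)·a`, or `x ↦ c·(P *ᵥ x) + d·(tr x)·e` for a permutation
matrix `P`. -/
theorem ando_characterization {n : ℕ} (hn : 1 ≤ n)
    (Φ : (Fin n → ℝ) →ₗ[ℝ] (Fin n → ℝ)) :
    (∀ x y : Fin n → ℝ, Maj x y → Maj (Φ x) (Φ y)) ↔
      ((∃ a : Fin n → ℝ, ∀ x : Fin n → ℝ, Φ x = (∑ i, x i) • a) ∨
        (∃ (c d : ℝ) (P : Matrix (Fin n) (Fin n) ℝ), IsPermMatrix P ∧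
          ∀ x : Fin n → ℝ, Φ x = c • (P *ᵥ x) + (d * ∑ i, x i) • (fun _ => (1 : ℝ)))) := by
  classical
  constructor
  · intro hmaj
    set a : Fin n → Fin n → ℝ := fun j => Φ (Pi.single j 1) with ha
    have hΦ : ∀ x : Fin n → ℝ, Φ x = ∑ j, x j • a j := by
      intro x
      conv_lhs => rw [← Finset.univ_sum_single x]
      rw [map_sum]
      refine Finset.sum_congr rfl (fun j _ => ?_)
      have hs : Pi.single j (x j) = x j • (Pi.single j 1 : Fin n → ℝ) := by
        funext i
        by_cases h : i = j
        · subst h; simp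
        · simp [Pi.single_apply, h]
      rw [hs, LinearMap.map_smul]
    have hΦi : ∀ (x : Fin n → ℝ) (i : Fin n), Φ x i = ∑ j, x j * a j i := by
      intro x i
      rw [hΦ x]
      rw [Finset.sum_apply]
      simp
    -- matrix-level permutation equivariance
    have step1 : ∀ σ : Equiv.Perm (Fin n), ∃ ρ : Equiv.Perm (Fin n),
        ∀ y : Fin n → ℝ, Φ (y ∘ σ) = (Φ y) ∘ ρ := by
      intro σ
      have hcover : (⋃ ρ : Equiv.Perm (Fin n),
          ((LinearMap.ker (Φ.comp (LinearMap.funLeft ℝ ℝ σ)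
            - (LinearMap.funLeft ℝ ℝ ρ).comp Φ) : Submodule ℝ (Fin n → ℝ)) : Set (Fin n → ℝ)))
          = Set.univ := by
        apply Set.eq_univ_of_forall
        intro y
        have h1 : Maj (Φ (y ∘ σ)) (Φ y) := hmaj _ _ (maj_comp_perm y σ)
        have h2 : Maj (Φ y) (Φ (y ∘ σ)) := hmaj _ _ (maj_comp_perm' y σ)
        obtain ⟨ρ, hρ⟩ := exists_perm_of_majEq h1 h2
        refine Set.mem_iUnion.mpr ⟨ρ, ?_⟩
        simp only [SetLike.mem_coe, LinearMap.mem_ker, LinearMap.sub_apply, LinearMap.comp_apply]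
        have e1 : (LinearMap.funLeft ℝ ℝ (⇑σ)) y = y ∘ σ := rfl
        have e2 : (LinearMap.funLeft ℝ ℝ (⇑ρ)) (Φ y) = (Φ y) ∘ ρ := rfl
        rw [e1, e2, hρ, sub_self]
      obtain ⟨ρ, hρ⟩ := Subspace.exists_eq_top_of_iUnion_eq_univ hcover
      refine ⟨ρ, fun y => ?_⟩
      have hy : y ∈ LinearMap.ker (Φ.comp (LinearMap.funLeft ℝ ℝ σ)
          - (LinearMap.funLeft ℝ ℝ ρ).comp Φ) := by
        rw [hρ]; exact Submodule.mem_top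
      rw [LinearMap.mem_ker, LinearMap.sub_apply, LinearMap.comp_apply, LinearMap.comp_apply,
        sub_eq_zero] at hy
      exact hy
    have colRel : ∀ σ : Equiv.Perm (Fin n), ∃ ρ : Equiv.Perm (Fin n),
        ∀ j, a (σ j) = a j ∘ ρ := by
      intro σ
      obtain ⟨ρ, hρ⟩ := step1 σ⁻¹
      refine ⟨ρ, fun j => ?_⟩
      have hsingle : (Pi.single j (1:ℝ)) ∘ ⇑σ⁻¹ = Pi.single (σ j) 1 := by
        funext i
        simp only [Function.comp_apply, Pi.single_apply]
        by_cases h : i = σ j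
        · rw [if_pos (show σ⁻¹ i = j by rw [h]; simp), if_pos h]
        · rw [if_neg (fun hh => h (by rw [← hh]; simp)), if_neg h]
      calc a (σ j) = Φ (Pi.single (σ j) 1) := rfl
        _ = Φ ((Pi.single j 1) ∘ ⇑σ⁻¹) := by rw [hsingle]
        _ = a j ∘ ρ := hρ _
    by_cases hconst : ∀ j k : Fin n, a j = a k
    · left
      refine ⟨a ⟨0, hn⟩, fun x => ?_⟩
      funext i
      rw [hΦi]
      have he : ∀ j, x j * a j i = x j * a ⟨0, hn⟩ i := fun j => by
        rw [hconst j ⟨0, hn⟩]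
      rw [Finset.sum_congr rfl (fun j _ => he j), ← Finset.sum_mul]
      simp
    · right
      push_neg at hconst
      obtain ⟨j₂, k₂, hjk⟩ := hconst
      have hne0 : j₂ ≠ k₂ := fun h => hjk (by rw [h])
      have hdist : ∀ j k : Fin n, j ≠ k → a j ≠ a k := by
        intro j k hjk' heq
        apply hjk
        obtain ⟨σ, hσj, hσk⟩ := exists_perm_pair_map hjk' hne0
        obtain ⟨ρ, hρ⟩ := colRel σ
        calc a j₂ = a (σ j) := by rw [hσj]
          _ = a j ∘ ρ := hρ j
          _ = a k ∘ ρ := by rw [heq]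
          _ = a (σ k) := (hρ k).symm
          _ = a k₂ := by rw [hσk]
      have hainj : Function.Injective a := by
        intro j k h
        by_contra hne'
        exact hdist j k hne' h
      choose θ hθ using colRel
      have θinj : Function.Injective θ := by
        intro σ1 σ2 h
        apply Equiv.ext
        intro j
        apply hainj
        rw [hθ σ1 j, h, ← hθ σ2 j]
      have θsurj : Function.Surjective θ := Finite.surjective_of_injective θinj
      set j₀ : Fin n := ⟨0, hn⟩ with hj₀
      set v : Fin n → ℝ := a j₀ with hv0
      have horb : ∀ ρ : Equiv.Perm (Fin n), ∃ j, v ∘ ρ = a j := by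
        intro ρ
        obtain ⟨σ, rfl⟩ := θsurj ρ
        exact ⟨σ j₀, (hθ σ j₀).symm⟩
      have hrearr : ∀ j, ∃ ρ : Equiv.Perm (Fin n), a j = v ∘ ρ := by
        intro j
        refine ⟨θ (Equiv.swap j₀ j), ?_⟩
        have hsw : (Equiv.swap j₀ j) j₀ = j := Equiv.swap_apply_left _ _
        rw [← hsw]
        exact hθ _ j₀
      choose ρv hρv using hrearr
      -- orbit cardinality bound
      have hsub : Finset.univ.image (fun ρ : Equiv.Perm (Fin n) => v ∘ ρ)
          ⊆ Finset.univ.image a := by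
        intro w hw
        obtain ⟨ρ, _, rfl⟩ := Finset.mem_image.mp hw
        obtain ⟨j, hj⟩ := horb ρ
        rw [hj]
        exact Finset.mem_image_of_mem a (Finset.mem_univ j)
      have hcard : (Finset.univ.image (fun ρ : Equiv.Perm (Fin n) => v ∘ ρ)).card ≤ n := by
        calc (Finset.univ.image (fun ρ : Equiv.Perm (Fin n) => v ∘ ρ)).card
            ≤ (Finset.univ.image a).card := Finset.card_le_card hsub
          _ ≤ (Finset.univ : Finset (Fin n)).card := Finset.card_image_le
          _ = n := by rw [Finset.card_univ, Fintype.card_fin]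
      have horbstab := card_orbit_mul_stab v
      have hstab_ge : Nat.factorial (n - 1)
          ≤ Fintype.card {g : Equiv.Perm (Fin n) // v ∘ g = v} := by
      -- n! = orb * stab ≤ n * stab
        have h1 : Nat.factorial n
            ≤ n * Fintype.card {g : Equiv.Perm (Fin n) // v ∘ g = v} := by
          rw [← horbstab]
          exact Nat.mul_le_mul_right _ hcard
        have h2 : Nat.factorial n = n * Nat.factorial (n - 1) := by
          obtain ⟨p, rfl⟩ : ∃ p, n = p + 1 := ⟨n - 1, by omega⟩
          simp [Nat.factorial_succ]
        rw [h2] at h1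
        exact Nat.le_of_mul_le_mul_left h1 (by omega)
      have hstab_eq := DomMulAct.stabilizer_card' v
      have hstab_ge' : Nat.factorial (n - 1) ≤
          ∏ t ∈ Finset.univ.image v,
            ((Finset.univ.filter (fun i => v i = t)).card).factorial := by
        rw [hstab_eq] at hstab_ge
        calc Nat.factorial (n-1)
            ≤ ∏ t ∈ Finset.univ.image v, (Fintype.card {i // v i = t}).factorial := hstab_ge
          _ = ∏ t ∈ Finset.univ.image v,
              ((Finset.univ.filter (fun i => v i = t)).card).factorial := by
              refine Finset.prod_congr rfl (fun t _ => ?_)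
              rw [Fintype.card_subtype]
      have hvnc : ∃ i i', v i ≠ v i' := by
        by_contra hcon
        push_neg at hcon
        apply hjk
        have hconstcol : ∀ j, a j = v := by
          intro j
          funext i
          rw [hρv j]
          exact hcon _ _
        rw [hconstcol j₂, hconstcol k₂]
      obtain ⟨i₀, c, d, hc0, hvshape⟩ := AndoAux2.shape v hvnc hstab_ge'
      set p : Fin n → Fin n := fun j => (ρv j)⁻¹ i₀ with hp
      have haj : ∀ j i, a j i = if i = p j then c + d else d := by
        intro j i
        rw [hρv j]
        simp only [Function.comp_apply]
        rw [hvshape (ρv j i)]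
        by_cases h : i = p j
        · rw [if_pos (show ρv j i = i₀ by rw [h]; simp [hp]), if_pos h]
        · rw [if_neg (fun hh => h (by simp only [hp]; rw [Equiv.Perm.eq_inv_iff_eq]; exact hh)),
            if_neg h]
      have hpinj : Function.Injective p := by
        intro j k h
        apply hainj
        funext i
        rw [haj j i, haj k i, h]
      have hpbij : Function.Bijective p := (Finite.injective_iff_bijective).mp hpinj
      set π : Equiv.Perm (Fin n) := Equiv.ofBijective p hpbij with hπ
      have hπapp : ∀ j, π j = p j := fun j => rfl
      refine ⟨c, d, Equiv.Perm.permMatrix ℝ π.symm, ⟨π.symm, rfl⟩, fun x => ?_⟩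
      funext i
      rw [hΦi]
      have expand : ∀ j, x j * a j i
          = (if j = π.symm i then c * x j else 0) + d * x j := by
        intro j
        rw [haj j i]
        by_cases h : i = p j
        · rw [if_pos h, if_pos (by rw [Equiv.eq_symm_apply, hπapp]; exact h.symm)]
          ring
        · rw [if_neg h, if_neg (fun hh => h (by rw [hh, ← hπapp]; exact (Equiv.apply_symm_apply π i).symm))]
          ring
      rw [Finset.sum_congr rfl (fun j _ => expand j), Finset.sum_add_distrib,
        Finset.sum_ite_eq' Finset.univ (π.symm i) (fun j => c * x j), ← Finset.mul_sum]
      simp only [Finset.mem_univ, if_true, Pi.add_apply, Pi.smul_apply, smul_eq_mul,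
        permMatrix_mulVec, Function.comp_apply, mul_one]
  · rintro (⟨a, hA⟩ | ⟨c, d, P, ⟨σ, rfl⟩, hB⟩) x y hxy
    · rw [hA x, hA y, maj_sum hxy]
      exact ⟨1, isDS_one, (Matrix.one_mulVec _).symm⟩
    · obtain ⟨A, ⟨h0, hr, hcsum⟩, hxA⟩ := hxy
      have hsum : ∑ i, x i = ∑ i, y i := maj_sum ⟨A, ⟨h0, hr, hcsum⟩, hxA⟩
      refine ⟨Matrix.of (fun i j => A (σ i) (σ j)), ⟨fun i j => h0 _ _, fun i => ?_, fun j => ?_⟩, ?_⟩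
      · show ∑ j, A (σ i) (σ j) = 1
        rw [Equiv.sum_comp σ (fun j => A (σ i) j)]
        exact hr (σ i)
      · show ∑ i, A (σ i) (σ j) = 1
        rw [Equiv.sum_comp σ (fun i => A i (σ j))]
        exact hcsum (σ j)
      · rw [hB x, hB y]
        funext i
        simp only [Pi.add_apply, Pi.smul_apply, smul_eq_mul, permMatrix_mulVec,
          Function.comp_apply, mul_one, Matrix.mulVec, dotProduct, Matrix.of_apply]
        have hx : x (σ i) = ∑ j, A (σ i) j * y j := by rw [hxA]; rfl
        have hexp : ∀ j, A (σ i) (σ j) * (c * y (σ j) + d * ∑ i', y i')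
            = c * (A (σ i) (σ j) * y (σ j)) + (d * ∑ i', y i') * A (σ i) (σ j) := by
          intro j; ring
        rw [Finset.sum_congr rfl (fun j _ => hexp j), Finset.sum_add_distrib,
          ← Finset.mul_sum, ← Finset.mul_sum,
          Equiv.sum_comp σ (fun k => A (σ i) k * y k),
          Equiv.sum_comp σ (fun j => A (σ i) j), hr (σ i), ← hx, hsum]
        ring
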